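/- Let k be a field of characteristic 0, let A = FreeAlgebra k (Fin 2) with generators x_1, x_2, let C ⊆ A be the k-linear span of {ab − ba : a, b ∈ A}, and let ⟨·⟩ : A → A/C be the quotient map. For a polynomial f ∈ k[u], let f(a) ∈ A denote the evaluation of f at a ∈ A (via the algebra map k[u] → A, u ↦ a). Then ⟨f(x_1 + x_2) − f(x_1) − f(x_2)⟩ = 0 if and only if f is a scalar multiple of u, i.e. ∃ c ∈ k, f = c·u. -/

import Mathlib

open Polynomial MonoidAlgebra

noncomputable section KernelDeltaAux

namespace KernelDeltaAux

variable (k : Type) [Field k]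

abbrev MA (k : Type) [Field k] := MonoidAlgebra k (FreeMonoid (Fin 2))

noncomputable def XX (i : Fin 2) : MA k := MonoidAlgebra.single (FreeMonoid.of i) 1

noncomputable def lam (w : List (Fin 2)) : MA k →ₗ[k] k :=
  ∑ i ∈ Finset.range w.length, Finsupp.lapply (FreeMonoid.ofList (w.rotate i)) ∘ₗ
    (MonoidAlgebra.coeffLinearEquiv k : MA k ≃ₗ[k] _).toLinearMap

lemma lam_single (w : List (Fin 2)) (m : FreeMonoid (Fin 2)) (c : k) :
    lam k w (MonoidAlgebra.single m c)
      = ∑ i ∈ Finset.range w.length,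
          if FreeMonoid.toList m = w.rotate i then c else 0 := by
  classical
  rw [lam, LinearMap.sum_apply]
  refine Finset.sum_congr rfl fun i _ => ?_
  show (Finsupp.single m c) (FreeMonoid.ofList (w.rotate i)) = _
  rw [Finsupp.single_apply]
  have : (m = FreeMonoid.ofList (w.rotate i)) ↔ (FreeMonoid.toList m = w.rotate i) :=
    ⟨fun h => by rw [h]; rfl, fun h => FreeMonoid.toList.injective (by simpa using h)⟩
  simp only [this]

lemma rotate_swap {w u v : List (Fin 2)} {i : ℕ} (h : w.rotate i = u ++ v) :
    w.rotate ((i + u.length) % w.length) = v ++ u := by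
  rw [List.rotate_mod, ← List.rotate_rotate, h, List.rotate_append_length_eq]

lemma mod_inv_aux {i a b n : ℕ} (hi : i < n) (hab : a + b = n) :
    ((i + a) % n + b) % n = i := by
  rw [Nat.mod_add_mod]
  have : i + a + b = i + n := by omega
  rw [this, Nat.add_mod_right, Nat.mod_eq_of_lt hi]

lemma filter_card_eq (w u v : List (Fin 2)) :
    ((Finset.range w.length).filter fun i => u ++ v = w.rotate i).card
      = ((Finset.range w.length).filter fun i => v ++ u = w.rotate i).card := by
  classical
  refine Finset.card_bij' (fun i _ => (i + u.length) % w.length)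
    (fun j _ => (j + v.length) % w.length) ?_ ?_ ?_ ?_
  · intro i hi
    simp only [Finset.mem_filter, Finset.mem_range] at hi ⊢
    exact ⟨Nat.mod_lt _ (by omega), (rotate_swap hi.2.symm).symm⟩
  · intro j hj
    simp only [Finset.mem_filter, Finset.mem_range] at hj ⊢
    exact ⟨Nat.mod_lt _ (by omega), (rotate_swap hj.2.symm).symm⟩
  · intro i hi
    simp only [Finset.mem_filter, Finset.mem_range] at hi
    have hlen : u.length + v.length = w.length := by
      have := congrArg List.length hi.2
      simpa [List.length_rotate] using this
    exact mod_inv_aux hi.1 hlen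
  · intro j hj
    simp only [Finset.mem_filter, Finset.mem_range] at hj
    have hlen : v.length + u.length = w.length := by
      have := congrArg List.length hj.2
      simpa [List.length_rotate] using this
    exact mod_inv_aux hj.1 hlen

lemma lam_single_comm (w : List (Fin 2)) (u v : FreeMonoid (Fin 2)) (c : k) :
    lam k w (MonoidAlgebra.single (u * v) c) = lam k w (MonoidAlgebra.single (v * u) c) := by
  classical
  rw [lam_single, lam_single]
  have key : ∀ a b : FreeMonoid (Fin 2),
      (∑ i ∈ Finset.range w.length, if FreeMonoid.toList (a * b) = w.rotate i then c else 0)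
        = ((Finset.range w.length).filter
            (fun i => FreeMonoid.toList a ++ FreeMonoid.toList b = w.rotate i)).card • c := by
    intro a b
    rw [FreeMonoid.toList_mul]
    rw [← Finset.sum_filter, Finset.sum_const]
  rw [key, key, filter_card_eq]

lemma lam_mul_comm (w : List (Fin 2)) (a b : MA k) :
    lam k w (a * b) = lam k w (b * a) := by
  induction a using MonoidAlgebra.induction_linear with
  | zero => simp
  | add f g hf hg => rw [add_mul, mul_add, map_add, map_add, hf, hg]
  | single m c =>
    induction b using MonoidAlgebra.induction_linear with
    | zero => simp
    | add f g hf hg => rw [add_mul, mul_add, map_add, map_add, hf, hg]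
    | single m' c' =>
      rw [MonoidAlgebra.single_mul_single, MonoidAlgebra.single_mul_single,
        lam_single_comm, mul_comm c c']

lemma XX_pow (i : Fin 2) (n : ℕ) :
    (XX k i) ^ n = MonoidAlgebra.single (FreeMonoid.ofList (List.replicate n i)) 1 := by
  induction n with
  | zero => simp [MonoidAlgebra.one_def]
  | succ n ih =>
    rw [pow_succ, ih, XX, MonoidAlgebra.single_mul_single, mul_one]
    congr 1
    rw [List.replicate_succ']
    rfl

lemma sum_pow (n : ℕ) :
    (XX k 0 + XX k 1) ^ n
      = ∑ g : Fin n → Fin 2, MonoidAlgebra.single (FreeMonoid.ofList (List.ofFn g)) 1 := by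
  induction n with
  | zero =>
    simp [MonoidAlgebra.one_def]
  | succ n ih =>
    rw [pow_succ', ih, Finset.mul_sum]
    rw [← (Fin.consEquiv (fun _ : Fin (n+1) => Fin 2)).sum_comp
      (fun h => MonoidAlgebra.single (FreeMonoid.ofList (List.ofFn h)) (1:k))]
    rw [Fintype.sum_prod_type, Fin.sum_univ_two]
    have expand : ∀ g : Fin n → Fin 2,
        (XX k 0 + XX k 1) * MonoidAlgebra.single (FreeMonoid.ofList (List.ofFn g)) (1:k)
          = MonoidAlgebra.single (FreeMonoid.ofList (List.ofFn (Fin.cons 0 g))) (1:k)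
            + MonoidAlgebra.single (FreeMonoid.ofList (List.ofFn (Fin.cons 1 g))) (1:k) := by
      intro g
      rw [add_mul, XX, XX, MonoidAlgebra.single_mul_single, MonoidAlgebra.single_mul_single,
        one_mul]
      congr 2 <;>
      · show FreeMonoid.ofList [_] * _ = _
        rw [← FreeMonoid.ofList_append]
        congr 1
        simp [List.ofFn_succ]
    rw [Finset.sum_congr rfl fun g _ => expand g, Finset.sum_add_distrib]
    rfl

lemma sum_ofFn_eq (n : ℕ) (l : List (Fin 2)) :
    (∑ g : Fin n → Fin 2, if List.ofFn g = l then (1:k) else 0)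
      = if l.length = n then 1 else 0 := by
  classical
  by_cases h : l.length = n
  · subst h
    rw [if_pos rfl]
    have h0 : List.ofFn (fun i : Fin l.length => getElem l (i : ℕ) i.isLt) = l := List.ofFn_getElem (xs := l)
    have : ∀ g : Fin l.length → Fin 2,
        (List.ofFn g = l) = (g = fun i : Fin l.length => getElem l (i : ℕ) i.isLt) := by
      intro g
      simp only [eq_iff_iff]
      constructor
      · intro hg; exact List.ofFn_injective (by rw [hg, h0])
      · intro hg; rw [hg, h0]
    simp only [this]
    rw [Finset.sum_ite_eq' Finset.univ]
    simp
  · rw [if_neg h]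
    apply Finset.sum_eq_zero
    intro g _
    rw [if_neg]
    intro hg
    exact h (by rw [← hg, List.length_ofFn])

lemma toList_ofList (l : List (Fin 2)) : FreeMonoid.toList (FreeMonoid.ofList l) = l := rfl

lemma lam_sum_pow (w : List (Fin 2)) (n : ℕ) :
    lam k w ((XX k 0 + XX k 1) ^ n) = if w.length = n then (n : k) else 0 := by
  classical
  rw [sum_pow, map_sum]
  have : ∀ g : Fin n → Fin 2,
      lam k w (MonoidAlgebra.single (FreeMonoid.ofList (List.ofFn g)) (1:k))
        = ∑ i ∈ Finset.range w.length, if List.ofFn g = w.rotate i then (1:k) else 0 := by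
    intro g; rw [lam_single]; rfl
  rw [Finset.sum_congr rfl fun g _ => this g, Finset.sum_comm]
  have inner : ∀ i ∈ Finset.range w.length,
      (∑ g : Fin n → Fin 2, if List.ofFn g = w.rotate i then (1:k) else 0)
        = if w.length = n then 1 else 0 := by
    intro i _
    rw [sum_ofFn_eq, List.length_rotate]
  rw [Finset.sum_congr rfl inner]
  by_cases h : w.length = n
  · simp [h]
  · simp [h]

lemma lam_XX_pow (w : List (Fin 2)) (i j : Fin 2) (hj : j ∈ w) (hij : j ≠ i) (n : ℕ) :
    lam k w ((XX k i) ^ n) = 0 := by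
  rw [XX_pow, lam_single]
  apply Finset.sum_eq_zero
  intro t _
  rw [toList_ofList, if_neg]
  intro h
  have : j ∈ w.rotate t := List.mem_rotate.2 hj
  rw [← h] at this
  exact hij (List.eq_of_mem_replicate this)

noncomputable def mu : MA k →ₗ[k] k := Finsupp.lapply (1 : FreeMonoid (Fin 2)) ∘ₗ
  (MonoidAlgebra.coeffLinearEquiv k : MA k ≃ₗ[k] _).toLinearMap

lemma mu_single (m : FreeMonoid (Fin 2)) (c : k) :
    mu k (MonoidAlgebra.single m c) = if FreeMonoid.toList m = [] then c else 0 := by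
  classical
  show (Finsupp.single m c) (1 : FreeMonoid (Fin 2)) = _
  rw [Finsupp.single_apply]
  have : (m = (1 : FreeMonoid (Fin 2))) = (FreeMonoid.toList m = []) := by
    simp only [eq_iff_iff]
    exact ⟨fun h => by rw [h]; rfl, fun h => FreeMonoid.toList.injective (by simpa using h)⟩
  simp only [this]

lemma mu_mul_comm (a b : MA k) : mu k (a * b) = mu k (b * a) := by
  induction a using MonoidAlgebra.induction_linear with
  | zero => simp
  | add f g hf hg => rw [add_mul, mul_add, map_add, map_add, hf, hg]
  | single m c =>
    induction b using MonoidAlgebra.induction_linear with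
    | zero => simp
    | add f g hf hg => rw [add_mul, mul_add, map_add, map_add, hf, hg]
    | single m' c' =>
      rw [MonoidAlgebra.single_mul_single, MonoidAlgebra.single_mul_single,
        mu_single, mu_single, mul_comm c c']
      simp only [FreeMonoid.toList_mul, List.append_eq_nil_iff]
      exact if_congr and_comm rfl rfl

lemma mu_sum_pow (n : ℕ) :
    mu k ((XX k 0 + XX k 1) ^ n) = if n = 0 then 1 else 0 := by
  classical
  rw [sum_pow, map_sum]
  have : ∀ g : Fin n → Fin 2,
      mu k (MonoidAlgebra.single (FreeMonoid.ofList (List.ofFn g)) (1:k))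
        = if List.ofFn g = ([] : List (Fin 2)) then (1:k) else 0 := fun g => mu_single k _ _
  rw [Finset.sum_congr rfl fun g _ => this g]
  cases n with
  | zero => simp
  | succ n =>
    rw [if_neg (Nat.succ_ne_zero n)]
    apply Finset.sum_eq_zero
    intro g _
    rw [if_neg]
    intro hg
    simpa using congrArg List.length hg

lemma mu_XX_pow (i : Fin 2) (n : ℕ) :
    mu k ((XX k i) ^ n) = if n = 0 then 1 else 0 := by
  rw [XX_pow, mu_single, toList_ofList]
  simp [List.replicate_eq_nil_iff]

end KernelDeltaAux

end KernelDeltaAux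

/-- Section 1.1: the kernel of `δ : 𝔉_1 → 𝔉_2` is spanned by the class of `x_1`.
Concretely: in `A = FreeAlgebra k (Fin 2)` with `C` the span of commutators and
`⟨·⟩ : A → A ⧸ C` the projection, for a polynomial `f ∈ k[u]` one has
`⟨f(x₁ + x₂) − f(x₁) − f(x₂)⟩ = 0` if and only if `f` is a scalar multiple of
`u`. -/
theorem kernel_delta_one (k : Type) [Field k] [CharZero k] (f : Polynomial k)
    (C : Submodule k (FreeAlgebra k (Fin 2)))
    (hC : C = Submodule.span k
      {x : FreeAlgebra k (Fin 2) | ∃ a b : FreeAlgebra k (Fin 2), x = a * b - b * a}) :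
    C.mkQ (Polynomial.aeval (FreeAlgebra.ι k (0 : Fin 2) + FreeAlgebra.ι k 1) f -
        Polynomial.aeval (FreeAlgebra.ι k (0 : Fin 2)) f -
        Polynomial.aeval (FreeAlgebra.ι k (1 : Fin 2)) f) = 0 ↔
      ∃ c : k, f = c • Polynomial.X := by
  classical
  open KernelDeltaAux in
  constructor
  · intro h
    rw [Submodule.mkQ_apply, Submodule.Quotient.mk_eq_zero, hC] at h
    set φ := FreeAlgebra.equivMonoidAlgebraFreeMonoid (R := k) (X := Fin 2) with hφdef
    have hXi : ∀ i : Fin 2, φ (FreeAlgebra.ι k i) = XX k i := by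
      intro i
      simp [hφdef, FreeAlgebra.equivMonoidAlgebraFreeMonoid, XX, MonoidAlgebra.of_apply]
    have hφδ : φ (Polynomial.aeval (FreeAlgebra.ι k (0 : Fin 2) + FreeAlgebra.ι k 1) f -
          Polynomial.aeval (FreeAlgebra.ι k (0 : Fin 2)) f -
          Polynomial.aeval (FreeAlgebra.ι k (1 : Fin 2)) f)
        = Polynomial.aeval (XX k 0 + XX k 1) f - Polynomial.aeval (XX k 0) f
            - Polynomial.aeval (XX k 1) f := by
      rw [map_sub, map_sub, ← Polynomial.aeval_algHom_apply, ← Polynomial.aeval_algHom_apply,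
        ← Polynomial.aeval_algHom_apply, map_add, hXi, hXi]
    have vanish : ∀ L : MA k →ₗ[k] k, (∀ a b : MA k, L (a * b) = L (b * a)) →
        ∑ n ∈ Finset.range (f.natDegree + 1),
          f.coeff n • (L ((XX k 0 + XX k 1) ^ n) - L ((XX k 0) ^ n) - L ((XX k 1) ^ n)) = 0 := by
      intro L hL
      have hle : Submodule.span k
          {x : FreeAlgebra k (Fin 2) | ∃ a b : FreeAlgebra k (Fin 2), x = a * b - b * a}
          ≤ LinearMap.ker (L ∘ₗ φ.toLinearMap) := by
        rw [Submodule.span_le]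
        rintro _ ⟨a, b, rfl⟩
        simp only [SetLike.mem_coe, LinearMap.mem_ker, LinearMap.coe_comp,
          Function.comp_apply, AlgEquiv.toLinearMap_apply, map_sub, map_mul]
        rw [hL, sub_self]
      have h0 : L (φ (Polynomial.aeval (FreeAlgebra.ι k (0 : Fin 2) + FreeAlgebra.ι k 1) f -
          Polynomial.aeval (FreeAlgebra.ι k (0 : Fin 2)) f -
          Polynomial.aeval (FreeAlgebra.ι k (1 : Fin 2)) f)) = 0 := hle h
      rw [hφδ] at h0
      rw [Polynomial.aeval_eq_sum_range, Polynomial.aeval_eq_sum_range,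
        Polynomial.aeval_eq_sum_range, map_sub, map_sub, map_sum, map_sum, map_sum] at h0
      simp only [map_smul] at h0
      rw [← Finset.sum_sub_distrib, ← Finset.sum_sub_distrib] at h0
      rw [← h0]
      exact Finset.sum_congr rfl fun n _ => by rw [smul_sub, smul_sub]
    -- coefficient 0
    have hc0 : f.coeff 0 = 0 := by
      have h1 := vanish (mu k) (mu_mul_comm k)
      simp only [mu_sum_pow, mu_XX_pow] at h1
      have : ∀ n ∈ Finset.range (f.natDegree + 1),
          f.coeff n • ((if n = 0 then (1:k) else 0) - (if n = 0 then (1:k) else 0)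
            - (if n = 0 then (1:k) else 0))
          = (if n = 0 then -f.coeff n else 0) := by
        intro n _
        by_cases hn : n = 0 <;> simp [hn]
      rw [Finset.sum_congr rfl this] at h1
      rw [Finset.sum_ite_eq' (Finset.range (f.natDegree + 1)) 0 (fun n => -f.coeff n)] at h1
      simp only [Finset.mem_range, Nat.succ_pos, if_pos (Nat.succ_pos f.natDegree),
        neg_eq_zero] at h1
      simpa using h1
    -- coefficients n ≥ 2
    have hcn : ∀ n : ℕ, 2 ≤ n → f.coeff n = 0 := by
      intro n hn2
      by_cases hdeg : n < f.natDegree + 1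
      · set w : List (Fin 2) := (0 : Fin 2) :: List.replicate (n - 1) 1 with hw
        have hwlen : w.length = n := by
          simp [hw]
          omega
        have h1w : (1 : Fin 2) ∈ w := by
          rw [hw]
          right
          exact List.mem_replicate.2 ⟨by omega, rfl⟩
        have h0w : (0 : Fin 2) ∈ w := by rw [hw]; exact List.mem_cons_self
        have h1 := vanish (lam k w) (lam_mul_comm k w)
        simp only [lam_sum_pow, lam_XX_pow k w 0 1 h1w (by decide),
          lam_XX_pow k w 1 0 h0w (by decide), hwlen, sub_zero] at h1
        have : ∀ m ∈ Finset.range (f.natDegree + 1),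
            f.coeff m • (if n = m then (m : k) else 0)
              = (if n = m then f.coeff m * (m : k) else 0) := by
          intro m _
          by_cases hm : n = m <;> simp [hm]
        rw [Finset.sum_congr rfl this, Finset.sum_ite_eq] at h1
        rw [if_pos (Finset.mem_range.2 hdeg)] at h1
        have hn0 : ((n : k)) ≠ 0 := Nat.cast_ne_zero.2 (by omega)
        exact (mul_eq_zero.1 h1).resolve_right hn0
      · exact Polynomial.coeff_eq_zero_of_natDegree_lt (by omega)
    refine ⟨f.coeff 1, ?_⟩
    ext n
    rw [Polynomial.coeff_smul, Polynomial.coeff_X, smul_eq_mul]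
    match n with
    | 0 => simpa using hc0
    | 1 => simp
    | (m + 2) => simpa using hcn (m + 2) (by omega)
  · rintro ⟨c, rfl⟩
    have : ∀ a : FreeAlgebra k (Fin 2), Polynomial.aeval (R := k) a (c • Polynomial.X) = c • a := by
      intro a
      rw [Polynomial.smul_eq_C_mul, map_mul, Polynomial.aeval_C, Polynomial.aeval_X,
        Algebra.smul_def]
    rw [this, this, this, smul_add]
    rw [show c • FreeAlgebra.ι k (0 : Fin 2) + c • FreeAlgebra.ι k (1 : Fin 2)
        - c • FreeAlgebra.ι k (0 : Fin 2) - c • FreeAlgebra.ι k (1 : Fin 2) = 0 by abel]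
    exact map_zero _
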